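/- For every integer n ≥ 2, Σ_{i=1}^{n−1} t(2i, 2n−2i) = (1/4)·t(2n). -/

import Mathlib

open Finset Filter Topology

/-- Multiple t-value: sum over strictly decreasing tuples of odd positive
integers. -/
noncomputable def multT {k : ℕ} (a : Fin k → ℕ) : ℝ :=
  ∑' n : {f : Fin k → ℕ // StrictAnti f ∧ ∀ i, Odd (f i)},
    ∏ i, 1 / ((n.1 i : ℝ) ^ (a i))

namespace MTaux

def e1 : ℕ ≃ {f : Fin 1 → ℕ // StrictAnti f ∧ ∀ i, Odd (f i)} where
  toFun k := ⟨![2 * k + 1], by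
    constructor
    · intro i j h
      exact absurd (Subsingleton.elim i j ▸ h) (lt_irrefl _)
    · intro i
      fin_cases i
      exact ⟨k, by simp⟩⟩
  invFun f := (f.1 0 - 1) / 2
  left_inv k := by simp
  right_inv := by
    rintro ⟨f, hsa, hodd⟩
    obtain ⟨r, hr⟩ := hodd 0
    ext i
    fin_cases i
    simp [hr]
  
lemma multT_one (a : ℕ) : multT ![a] = ∑' k : ℕ, 1 / ((2 * k + 1 : ℝ)) ^ a := by
  rw [multT, ← e1.tsum_eq]
  congr 1
  funext k
  simp [e1]

def e2 : ℕ × ℕ ≃ {f : Fin 2 → ℕ // StrictAnti f ∧ ∀ i, Odd (f i)} where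
  toFun x := ⟨![2 * x.1 + 2 * x.2 + 3, 2 * x.1 + 1], by
    constructor
    · intro i j h
      fin_cases i <;> fin_cases j <;> simp_all <;> omega
    · intro i
      fin_cases i
      · exact ⟨x.1 + x.2 + 1, by simp [Matrix.cons_val_zero]; ring⟩
      · exact ⟨x.1, by simp⟩⟩
  invFun f := ((f.1 1 - 1) / 2, (f.1 0 - f.1 1) / 2 - 1)
  left_inv x := by obtain ⟨k, j⟩ := x; simp [Prod.ext_iff]; omega
  right_inv := by
    rintro ⟨f, hsa, hodd⟩
    obtain ⟨r, hr⟩ := hodd 0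
    obtain ⟨s, hs⟩ := hodd 1
    have h01 : f 1 < f 0 := hsa (show (0 : Fin 2) < 1 by decide)
    ext i
    fin_cases i <;> simp [hr, hs] <;> omega

lemma multT_two (a b : ℕ) :
    multT ![a, b] = ∑' x : ℕ × ℕ,
      1 / ((2 * x.1 + 2 * x.2 + 3 : ℝ)) ^ a * (1 / ((2 * x.1 + 1 : ℝ)) ^ b) := by
  rw [multT, ← e2.tsum_eq]
  congr 1
  funext x
  simp [e2, Fin.prod_univ_two]
  ring_nf



noncomputable def H (n : ℕ) : ℝ := ∑ i ∈ Finset.range n, 1 / ((i : ℝ) + 1)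

lemma S2 : Summable (fun k : ℕ => 1 / ((k : ℝ) + 1) ^ 2) := by
  have := (summable_nat_add_iff (f := fun n : ℕ => 1 / (n : ℝ) ^ 2) 1).mpr
    (by rw [Real.summable_one_div_nat_pow]; norm_num)
  simpa using this

lemma tele_summable (a : ℕ) :
    Summable (fun j : ℕ => 1 / ((j : ℝ) + 1) - 1 / ((j : ℝ) + 1 + a)) := by
  apply Summable.of_nonneg_of_le (f := fun j : ℕ => (a : ℝ) * (1 / ((j : ℝ) + 1) ^ 2))
  · intro j
    have h1 : (0 : ℝ) < (j : ℝ) + 1 := by positivity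
    have h2 : (0 : ℝ) < (j : ℝ) + 1 + a := by positivity
    have : 1 / ((j : ℝ) + 1 + a) ≤ 1 / ((j : ℝ) + 1) :=
      one_div_le_one_div_of_le h1 (by linarith [Nat.cast_nonneg (α := ℝ) a])
    linarith
  · intro j
    have h1 : (0 : ℝ) < (j : ℝ) + 1 := by positivity
    have h2 : (0 : ℝ) < (j : ℝ) + 1 + a := by positivity
    rw [div_sub_div _ _ (ne_of_gt h1) (ne_of_gt h2)]
    rw [div_le_iff₀ (by positivity)]
    have hle : ((j : ℝ) + 1) ≤ ((j : ℝ) + 1 + a) := by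
      linarith [Nat.cast_nonneg (α := ℝ) a]
    have : (a : ℝ) * (1 / ((j:ℝ)+1)^2) * (((j:ℝ)+1) * ((j:ℝ)+1+a))
        = a * (((j:ℝ)+1+a) / ((j:ℝ)+1)) := by field_simp
    rw [this]
    have : (1 : ℝ) ≤ ((j:ℝ)+1+a) / ((j:ℝ)+1) := (one_le_div h1).mpr hle
    nlinarith [Nat.cast_nonneg (α := ℝ) a]
  · exact S2.mul_left _

lemma tele_hasSum (a : ℕ) :
    HasSum (fun j : ℕ => 1 / ((j : ℝ) + 1) - 1 / ((j : ℝ) + 1 + a)) (H a) := by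
  set f : ℕ → ℝ := fun j => 1 / ((j : ℝ) + 1) with hf
  rw [hasSum_iff_tendsto_nat_of_nonneg]
  · -- partial sums
    have key : ∀ N : ℕ, (∑ j ∈ range N, (f j - 1 / ((j : ℝ) + 1 + a)))
        = H a - ∑ j ∈ range a, f (N + j) := by
      intro N
      have e1 : ∀ j : ℕ, (1 : ℝ) / ((j : ℝ) + 1 + a) = f (a + j) := by
        intro j; simp [hf]; ring_nf
      simp_rw [Finset.sum_sub_distrib]
      have e2 : ∑ j ∈ range N, (1 : ℝ) / ((j : ℝ) + 1 + a) = ∑ i ∈ Ico a (a + N), f i := by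
        rw [Finset.sum_Ico_eq_sum_range]
        simp_rw [e1]
        have : a + N - a = N := by omega
        rw [this]
      rw [e2]
      have e3 : ∑ j ∈ range N, f j = ∑ i ∈ Ico 0 N, f i := by
        rw [Finset.range_eq_Ico]
      have c1 : ∑ i ∈ Ico 0 a, f i + ∑ i ∈ Ico a (a + N), f i = ∑ i ∈ Ico 0 (a + N), f i :=
        Finset.sum_Ico_consecutive _ (by omega) (by omega)
      have c2 : ∑ i ∈ Ico 0 N, f i + ∑ i ∈ Ico N (a + N), f i = ∑ i ∈ Ico 0 (a + N), f i :=
        Finset.sum_Ico_consecutive _ (by omega) (by omega)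
      have e4 : ∑ i ∈ Ico N (a + N), f i = ∑ j ∈ range a, f (N + j) := by
        rw [Finset.sum_Ico_eq_sum_range]
        have : a + N - N = a := by omega
        rw [this]
      have e5 : H a = ∑ i ∈ Ico 0 a, f i := by rw [H, Finset.range_eq_Ico]
      rw [e3, e5, ← e4]
      linarith
    rw [show (fun N : ℕ => ∑ j ∈ range N, (f j - 1 / ((j : ℝ) + 1 + a))) = fun N : ℕ => H a - ∑ j ∈ range a, f (N + j) from funext key]
    have : Tendsto (fun N : ℕ => ∑ j ∈ range a, f (N + j)) atTop (𝓝 0) := by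
      have h0 : (0 : ℝ) = ∑ _j ∈ range a, (0 : ℝ) := by simp
      rw [h0]
      apply tendsto_finset_sum
      intro j _
      apply squeeze_zero (g := fun N : ℕ => 1 / ((N : ℝ) + 1))
      · intro N; simp only [hf]; positivity
      · intro N
        simp only [hf]
        apply one_div_le_one_div_of_le (by positivity)
        push_cast
        linarith [Nat.cast_nonneg (α := ℝ) j]
      · exact tendsto_one_div_add_atTop_nhds_zero_nat
    have := tendsto_const_nhds (x := H a) (f := atTop (α := ℕ)) |>.sub this
    simpa using this
  · intro j
    have h1 : (0 : ℝ) < (j : ℝ) + 1 := by positivity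
    have : 1 / ((j : ℝ) + 1 + a) ≤ 1 / ((j : ℝ) + 1) :=
      one_div_le_one_div_of_le h1 (by linarith [Nat.cast_nonneg (α := ℝ) a])
    linarith






lemma A_inner (k : ℕ) :
    HasSum (fun j : ℕ => 1 / ((2 * (k:ℝ) + 2 * (j:ℝ) + 3) ^ 2 - (2 * (k:ℝ) + 1) ^ 2))
      (H (2 * k + 1) / (4 * (2 * (k:ℝ) + 1))) := by
  have h := (tele_hasSum (2 * k + 1)).mul_left (1 / (4 * (2 * (k:ℝ) + 1)))
  have he : (fun j : ℕ => 1 / (4 * (2 * (k:ℝ) + 1)) *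
      (1 / ((j : ℝ) + 1) - 1 / ((j : ℝ) + 1 + (2 * k + 1 : ℕ))))
      = fun j : ℕ => 1 / ((2 * (k:ℝ) + 2 * (j:ℝ) + 3) ^ 2 - (2 * (k:ℝ) + 1) ^ 2) := by
    funext j
    have hd : (2 * (k:ℝ) + 2 * (j:ℝ) + 3) ^ 2 - (2 * (k:ℝ) + 1) ^ 2
        = 4 * ((j:ℝ) + 1) * ((j:ℝ) + 1 + (2 * (k:ℝ) + 1)) := by ring
    rw [hd]
    push_cast
    have h1 : ((j:ℝ) + 1) ≠ 0 := by positivity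
    have h2 : ((j:ℝ) + 1 + (2 * (k:ℝ) + 1)) ≠ 0 := by positivity
    have h3 : (2 * (k:ℝ) + 1) ≠ 0 := by positivity
    field_simp
    ring
  rw [he] at h
  have hv : 1 / (4 * (2 * (k:ℝ) + 1)) * H (2 * k + 1) = H (2 * k + 1) / (4 * (2 * (k:ℝ) + 1)) := by
    ring
  rwa [hv] at h

lemma B_inner (m : ℕ) :
    ∑ t ∈ range m, 1 / ((2 * (m:ℝ) + 1) ^ 2 - (2 * (t:ℝ) + 1) ^ 2)
      = H (2 * m) / (4 * (2 * (m:ℝ) + 1)) := by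
  have key : ∀ t ∈ range m, 1 / ((2 * (m:ℝ) + 1) ^ 2 - (2 * (t:ℝ) + 1) ^ 2)
      = 1 / (4 * (2 * (m:ℝ) + 1)) * (1 / ((m:ℝ) - t) + 1 / ((m:ℝ) + t + 1)) := by
    intro t ht
    rw [mem_range] at ht
    have htm : (t:ℝ) < m := by exact_mod_cast ht
    have hd : (2 * (m:ℝ) + 1) ^ 2 - (2 * (t:ℝ) + 1) ^ 2
        = 4 * ((m:ℝ) - t) * ((m:ℝ) + t + 1) := by ring
    rw [hd]
    have h1 : ((m:ℝ) - t) ≠ 0 := by linarith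
    have h2 : ((m:ℝ) + t + 1) ≠ 0 := by positivity
    have h3 : (2 * (m:ℝ) + 1) ≠ 0 := by positivity
    field_simp
    ring
  rw [Finset.sum_congr rfl key, ← Finset.mul_sum, Finset.sum_add_distrib]
  have s1 : ∑ t ∈ range m, 1 / ((m:ℝ) - t) = H m := by
    have := Finset.sum_range_reflect (fun t : ℕ => 1 / ((t : ℝ) + 1)) m
    rw [H, ← this]
    apply Finset.sum_congr rfl
    intro t ht
    rw [mem_range] at ht
    congr 1
    have : ((m - 1 - t : ℕ) : ℝ) = (m:ℝ) - t - 1 := by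
      have : (m - 1 - t : ℕ) = m - (t + 1) := by omega
      rw [this, Nat.cast_sub (by omega)]
      push_cast
      ring
    rw [this]
    ring
  have s2 : ∑ t ∈ range m, 1 / ((m:ℝ) + t + 1) = H (2 * m) - H m := by
    have c1 : ∑ i ∈ Ico 0 m, (fun i : ℕ => 1 / ((i:ℝ) + 1)) i
        + ∑ i ∈ Ico m (2 * m), (fun i : ℕ => 1 / ((i:ℝ) + 1)) i
        = ∑ i ∈ Ico 0 (2 * m), (fun i : ℕ => 1 / ((i:ℝ) + 1)) i :=
      Finset.sum_Ico_consecutive _ (by omega) (by omega)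
    have e1 : ∑ i ∈ Ico m (2 * m), (fun i : ℕ => 1 / ((i:ℝ) + 1)) i
        = ∑ t ∈ range m, 1 / ((m:ℝ) + t + 1) := by
      rw [Finset.sum_Ico_eq_sum_range]
      have h2m : 2 * m - m = m := by omega
      rw [h2m]
      apply Finset.sum_congr rfl
      intro t _
      push_cast
      ring_nf
    have e2 : H m = ∑ i ∈ Ico 0 m, (fun i : ℕ => 1 / ((i:ℝ) + 1)) i := by
      rw [H, Finset.range_eq_Ico]
    have e3 : H (2 * m) = ∑ i ∈ Ico 0 (2 * m), (fun i : ℕ => 1 / ((i:ℝ) + 1)) i := by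
      rw [H, Finset.range_eq_Ico]
    rw [← e1, e2, e3]
    linarith
  rw [s1, s2]
  ring




lemma field_id (A B : ℝ) (N : ℕ) (hA : 0 < A) (hB : 0 < B) (hBA : B < A) :
    (A⁻¹ * B⁻¹) * (((A ^ N)⁻¹ - (B ^ N)⁻¹) / (A⁻¹ - B⁻¹))
      = 1 / (B ^ N * (A - B)) - 1 / (A ^ N * (A - B)) := by
  have hA0 : A ≠ 0 := ne_of_gt hA
  have hB0 : B ≠ 0 := ne_of_gt hB
  have hAN : A ^ N ≠ 0 := pow_ne_zero _ hA0
  have hBN : B ^ N ≠ 0 := pow_ne_zero _ hB0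
  have hABne : A - B ≠ 0 := by intro h; nlinarith
  have hinv : A⁻¹ - B⁻¹ ≠ 0 := by
    have : A⁻¹ < B⁻¹ := by
      apply inv_strictAnti₀ hB hBA
    intro h; nlinarith
  have e1 : A⁻¹ - B⁻¹ = (B - A) / (A * B) := by field_simp
  have e2 : (A ^ N)⁻¹ - (B ^ N)⁻¹ = (B ^ N - A ^ N) / (A ^ N * B ^ N) := by field_simp
  rw [e1, e2]
  rw [div_div_div_comm]
  have hBAne : B - A ≠ 0 := by intro h; apply hABne; linarith
  field_simp
  ring

lemma inner_closed (n : ℕ) (hn : 2 ≤ n) (p q : ℝ) (hq : 1 ≤ q) (hpq : q < p) :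
    ∑ i ∈ Finset.Icc 1 (n - 1), 1 / p ^ (2 * i) * (1 / q ^ (2 * n - 2 * i))
      = 1 / (q ^ (2 * n - 2) * (p ^ 2 - q ^ 2)) - 1 / (p ^ (2 * n - 2) * (p ^ 2 - q ^ 2)) := by
  have hq0 : 0 < q := by linarith
  have hp0 : 0 < p := by linarith
  set A : ℝ := p ^ 2 with hA
  set B : ℝ := q ^ 2 with hB
  have hA0 : 0 < A := by positivity
  have hB0 : 0 < B := by positivity
  have hBA : B < A := by
    rw [hA, hB]
    nlinarith
  -- rewrite the sum
  have hIcc : Finset.Icc 1 (n - 1) = Finset.Ico 1 n := by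
    rw [← Finset.Ico_add_one_right_eq_Icc]
    congr 1
    omega
  rw [hIcc, Finset.sum_Ico_eq_sum_range]
  have hterm : ∀ i ∈ range (n - 1),
      1 / p ^ (2 * (1 + i)) * (1 / q ^ (2 * n - 2 * (1 + i)))
        = (A⁻¹ * B⁻¹) * (A⁻¹ ^ i * B⁻¹ ^ (n - 1 - 1 - i)) := by
    intro i hi
    rw [mem_range] at hi
    have e1 : 2 * (1 + i) = 2 * (1 + i) := rfl
    have e2 : 2 * n - 2 * (1 + i) = 2 * (n - 1 - i) := by omega
    rw [e2]
    rw [pow_mul p 2 (1 + i), pow_mul q 2 (n - 1 - i)]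
    have e3 : n - 1 - i = (n - 1 - 1 - i) + 1 := by omega
    rw [e3]
    rw [pow_succ', pow_succ']
    simp only [one_div, mul_inv, ← inv_pow]
    ring
  rw [Finset.sum_congr rfl hterm, ← Finset.mul_sum]
  have hgeom := geom_sum₂_mul (A⁻¹) (B⁻¹) (n - 1)
  have hxy : A⁻¹ - B⁻¹ ≠ 0 := by
    have : A⁻¹ < B⁻¹ := inv_strictAnti₀ hB0 hBA
    intro h; nlinarith
  have hsum : ∑ i ∈ range (n - 1), A⁻¹ ^ i * B⁻¹ ^ (n - 1 - 1 - i)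
      = ((A⁻¹ ^ (n - 1)) - (B⁻¹ ^ (n - 1))) / (A⁻¹ - B⁻¹) := by
    rw [eq_div_iff hxy]
    exact hgeom
  rw [hsum]
  have e4 : A⁻¹ ^ (n - 1) = (A ^ (n - 1))⁻¹ := by rw [inv_pow]
  have e5 : B⁻¹ ^ (n - 1) = (B ^ (n - 1))⁻¹ := by rw [inv_pow]
  rw [e4, e5, field_id A B (n - 1) hA0 hB0 hBA]
  have e6 : B ^ (n - 1) = q ^ (2 * n - 2) := by
    rw [hB, ← pow_mul]
    congr 1
    omega
  have e7 : A ^ (n - 1) = p ^ (2 * n - 2) := by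
    rw [hA, ← pow_mul]
    congr 1
    omega
  rw [e6, e7, hA, hB]





lemma bound_prod : Summable (fun x : ℕ × ℕ => 1 / ((x.1 : ℝ) + 1) ^ 2 * (1 / ((x.2 : ℝ) + 1) ^ 2)) := by
  apply Summable.mul_of_nonneg S2 S2 <;> intro k <;> positivity

lemma summable_of_bound {f : ℕ × ℕ → ℝ} (h0 : ∀ x, 0 ≤ f x)
    (hle : ∀ x, f x ≤ 1 / ((x.1 : ℝ) + 1) ^ 2 * (1 / ((x.2 : ℝ) + 1) ^ 2)) : Summable f :=
  Summable.of_nonneg_of_le h0 hle bound_prod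

-- basic numeric facts
lemma Dpos (k j : ℕ) :
    ((j : ℝ) + 1) ^ 2 ≤ (2 * (k:ℝ) + 2 * (j:ℝ) + 3) ^ 2 - (2 * (k:ℝ) + 1) ^ 2 := by
  have hk : (0:ℝ) ≤ (k:ℝ) := Nat.cast_nonneg k
  have hj : (0:ℝ) ≤ (j:ℝ) := Nat.cast_nonneg j
  nlinarith

lemma inv_pow_le (b c : ℝ) (e : ℕ) (hb : 1 ≤ b) (hcb : c ≤ b) (hc : 0 < c) (he : 2 ≤ e) :
    1 / b ^ e ≤ 1 / c ^ 2 := by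
  have h1 : c ^ 2 ≤ b ^ 2 := by nlinarith
  have h2 : b ^ 2 ≤ b ^ e := pow_le_pow_right₀ hb he
  have : (0:ℝ) < c ^ 2 := by positivity
  apply one_div_le_one_div_of_le this (le_trans h1 h2)

lemma SG (n : ℕ) (hn : 2 ≤ n) (i : ℕ) (hi : i ∈ Finset.Icc 1 (n - 1)) :
    Summable (fun x : ℕ × ℕ =>
      1 / (2 * (x.1:ℝ) + 2 * (x.2:ℝ) + 3) ^ (2 * i) * (1 / (2 * (x.1:ℝ) + 1) ^ (2 * n - 2 * i))) := by
  rw [Finset.mem_Icc] at hi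
  apply summable_of_bound
  · intro x
    have h1 : (0:ℝ) ≤ (x.1:ℝ) := Nat.cast_nonneg _
    have h2 : (0:ℝ) ≤ (x.2:ℝ) := Nat.cast_nonneg _
    positivity
  · intro x
    have h1 : (0:ℝ) ≤ (x.1:ℝ) := Nat.cast_nonneg _
    have h2 : (0:ℝ) ≤ (x.2:ℝ) := Nat.cast_nonneg _
    have b1 : 1 / (2 * (x.1:ℝ) + 2 * (x.2:ℝ) + 3) ^ (2 * i) ≤ 1 / ((x.2:ℝ) + 1) ^ 2 :=
      inv_pow_le _ _ _ (by linarith) (by linarith) (by linarith) (by omega)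
    have b2 : 1 / (2 * (x.1:ℝ) + 1) ^ (2 * n - 2 * i) ≤ 1 / ((x.1:ℝ) + 1) ^ 2 :=
      inv_pow_le _ _ _ (by linarith) (by linarith) (by linarith) (by omega)
    have hb1 : (0:ℝ) ≤ 1 / (2 * (x.1:ℝ) + 2 * (x.2:ℝ) + 3) ^ (2 * i) := by positivity
    have hb2 : (0:ℝ) ≤ 1 / ((x.1:ℝ) + 1) ^ 2 := by positivity
    calc 1 / (2 * (x.1:ℝ) + 2 * (x.2:ℝ) + 3) ^ (2 * i) * (1 / (2 * (x.1:ℝ) + 1) ^ (2 * n - 2 * i))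
        ≤ 1 / ((x.2:ℝ) + 1) ^ 2 * (1 / ((x.1:ℝ) + 1) ^ 2) :=
          mul_le_mul b1 b2 (by positivity) (by positivity)
      _ = 1 / ((x.1:ℝ) + 1) ^ 2 * (1 / ((x.2:ℝ) + 1) ^ 2) := by ring

lemma SA (n : ℕ) (hn : 2 ≤ n) :
    Summable (fun x : ℕ × ℕ => 1 / (2 * (x.1:ℝ) + 1) ^ (2 * n - 2) *
      (1 / ((2 * (x.1:ℝ) + 2 * (x.2:ℝ) + 3) ^ 2 - (2 * (x.1:ℝ) + 1) ^ 2))) := by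
  apply summable_of_bound
  · intro x
    have h1 : (0:ℝ) ≤ (x.1:ℝ) := Nat.cast_nonneg _
    have hD := Dpos x.1 x.2
    have h2 : (0:ℝ) < ((x.2:ℝ) + 1) ^ 2 := by positivity
    have hDpos : (0:ℝ) < (2 * (x.1:ℝ) + 2 * (x.2:ℝ) + 3) ^ 2 - (2 * (x.1:ℝ) + 1) ^ 2 := by linarith
    positivity
  · intro x
    have h1 : (0:ℝ) ≤ (x.1:ℝ) := Nat.cast_nonneg _
    have h2 : (0:ℝ) ≤ (x.2:ℝ) := Nat.cast_nonneg _
    have hD := Dpos x.1 x.2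
    have h3 : (0:ℝ) < ((x.2:ℝ) + 1) ^ 2 := by positivity
    have b1 : 1 / (2 * (x.1:ℝ) + 1) ^ (2 * n - 2) ≤ 1 / ((x.1:ℝ) + 1) ^ 2 :=
      inv_pow_le _ _ _ (by linarith) (by linarith) (by linarith) (by omega)
    have b2 : 1 / ((2 * (x.1:ℝ) + 2 * (x.2:ℝ) + 3) ^ 2 - (2 * (x.1:ℝ) + 1) ^ 2)
        ≤ 1 / ((x.2:ℝ) + 1) ^ 2 := one_div_le_one_div_of_le h3 hD
    have hDpos : (0:ℝ) < (2 * (x.1:ℝ) + 2 * (x.2:ℝ) + 3) ^ 2 - (2 * (x.1:ℝ) + 1) ^ 2 := by linarith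
    exact mul_le_mul b1 b2 (le_of_lt (one_div_pos.mpr hDpos)) (by positivity)

lemma SB (n : ℕ) (hn : 2 ≤ n) :
    Summable (fun x : ℕ × ℕ => 1 / (2 * (x.1:ℝ) + 2 * (x.2:ℝ) + 3) ^ (2 * n - 2) *
      (1 / ((2 * (x.1:ℝ) + 2 * (x.2:ℝ) + 3) ^ 2 - (2 * (x.1:ℝ) + 1) ^ 2))) := by
  apply summable_of_bound
  · intro x
    have h1 : (0:ℝ) ≤ (x.1:ℝ) := Nat.cast_nonneg _
    have h2 : (0:ℝ) ≤ (x.2:ℝ) := Nat.cast_nonneg _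
    have hD := Dpos x.1 x.2
    have h3 : (0:ℝ) < ((x.2:ℝ) + 1) ^ 2 := by positivity
    have hDpos : (0:ℝ) < (2 * (x.1:ℝ) + 2 * (x.2:ℝ) + 3) ^ 2 - (2 * (x.1:ℝ) + 1) ^ 2 := by linarith
    positivity
  · intro x
    have h1 : (0:ℝ) ≤ (x.1:ℝ) := Nat.cast_nonneg _
    have h2 : (0:ℝ) ≤ (x.2:ℝ) := Nat.cast_nonneg _
    have hD := Dpos x.1 x.2
    have h3 : (0:ℝ) < ((x.2:ℝ) + 1) ^ 2 := by positivity
    have b1 : 1 / (2 * (x.1:ℝ) + 2 * (x.2:ℝ) + 3) ^ (2 * n - 2) ≤ 1 / ((x.1:ℝ) + 1) ^ 2 :=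
      inv_pow_le _ _ _ (by linarith) (by linarith) (by linarith) (by omega)
    have b2 : 1 / ((2 * (x.1:ℝ) + 2 * (x.2:ℝ) + 3) ^ 2 - (2 * (x.1:ℝ) + 1) ^ 2)
        ≤ 1 / ((x.2:ℝ) + 1) ^ 2 := one_div_le_one_div_of_le h3 hD
    have hDpos : (0:ℝ) < (2 * (x.1:ℝ) + 2 * (x.2:ℝ) + 3) ^ 2 - (2 * (x.1:ℝ) + 1) ^ 2 := by linarith
    exact mul_le_mul b1 b2 (le_of_lt (one_div_pos.mpr hDpos)) (by positivity)


lemma split_div (a b : ℝ) : 1 / (a * b) = 1 / a * (1 / b) := by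
  rw [one_div, one_div, one_div, mul_inv]

lemma Hsucc (m : ℕ) : H (2 * m + 1) = H (2 * m) + 1 / (2 * (m:ℝ) + 1) := by
  rw [H, H, Finset.sum_range_succ]
  push_cast
  ring_nf

end MTaux

open MTaux in
/-- `Σ_{i=1}^{n−1} t(2i, 2n−2i) = t(2n)/4` for `n ≥ 2`. -/
theorem multT_even_pair_sum (n : ℕ) (hn : 2 ≤ n) :
    ∑ i ∈ Finset.Icc 1 (n - 1), multT ![2 * i, 2 * n - 2 * i] =
      (1 / 4) * multT ![2 * n] := by
  classical
  simp only [MTaux.multT_two, MTaux.multT_one]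
  -- swap finite sum and tsum
  rw [← Summable.tsum_finsetSum (f := fun i (x : ℕ × ℕ) =>
      1 / (2 * (x.1:ℝ) + 2 * (x.2:ℝ) + 3) ^ (2 * i) * (1 / (2 * (x.1:ℝ) + 1) ^ (2 * n - 2 * i)))
      (fun i hi => SG n hn i hi)]
  -- closed form of inner sum
  have hpoint : ∀ x : ℕ × ℕ,
      (∑ i ∈ Finset.Icc 1 (n - 1),
        1 / (2 * (x.1:ℝ) + 2 * (x.2:ℝ) + 3) ^ (2 * i) * (1 / (2 * (x.1:ℝ) + 1) ^ (2 * n - 2 * i)))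
      = 1 / (2 * (x.1:ℝ) + 1) ^ (2 * n - 2) *
          (1 / ((2 * (x.1:ℝ) + 2 * (x.2:ℝ) + 3) ^ 2 - (2 * (x.1:ℝ) + 1) ^ 2))
        - 1 / (2 * (x.1:ℝ) + 2 * (x.2:ℝ) + 3) ^ (2 * n - 2) *
          (1 / ((2 * (x.1:ℝ) + 2 * (x.2:ℝ) + 3) ^ 2 - (2 * (x.1:ℝ) + 1) ^ 2)) := by
    intro x
    have h1 : (0:ℝ) ≤ (x.1:ℝ) := Nat.cast_nonneg _
    have h2 : (0:ℝ) ≤ (x.2:ℝ) := Nat.cast_nonneg _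
    rw [inner_closed n hn (2 * (x.1:ℝ) + 2 * (x.2:ℝ) + 3) (2 * (x.1:ℝ) + 1)
      (by linarith) (by linarith)]
    rw [split_div, split_div]
  rw [tsum_congr hpoint]
  rw [Summable.tsum_sub (SA n hn) (SB n hn)]
  -- fiberwise evaluation of the first tsum
  have fiberA : ∀ k : ℕ, HasSum (fun j : ℕ => 1 / (2 * (k:ℝ) + 1) ^ (2 * n - 2) *
      (1 / ((2 * (k:ℝ) + 2 * (j:ℝ) + 3) ^ 2 - (2 * (k:ℝ) + 1) ^ 2)))
      (1 / (2 * (k:ℝ) + 1) ^ (2 * n - 2) * (H (2 * k + 1) / (4 * (2 * (k:ℝ) + 1)))) := by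
    intro k
    exact (A_inner k).mul_left _
  have hA : HasSum (fun k : ℕ => 1 / (2 * (k:ℝ) + 1) ^ (2 * n - 2) *
      (H (2 * k + 1) / (4 * (2 * (k:ℝ) + 1))))
      (∑' x : ℕ × ℕ, 1 / (2 * (x.1:ℝ) + 1) ^ (2 * n - 2) *
        (1 / ((2 * (x.1:ℝ) + 2 * (x.2:ℝ) + 3) ^ 2 - (2 * (x.1:ℝ) + 1) ^ 2))) :=
    (SA n hn).hasSum.prod_fiberwise fiberA
  -- the second tsum, reindexed by the larger odd number
  set F : ℕ × ℕ → ℝ := fun y =>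
    if y.2 < y.1 then 1 / (2 * (y.1:ℝ) + 1) ^ (2 * n - 2) *
      (1 / ((2 * (y.1:ℝ) + 1) ^ 2 - (2 * (y.2:ℝ) + 1) ^ 2)) else 0 with hF
  set ι : ℕ × ℕ → ℕ × ℕ := fun x => (x.1 + x.2 + 1, x.1) with hι
  have hinj : Function.Injective ι := by
    intro a b h
    rw [hι, Prod.mk.injEq] at h
    obtain ⟨h1, h2⟩ := h
    exact Prod.ext (by omega) (by omega)
  have hsupp : ∀ y ∉ Set.range ι, F y = 0 := by
    intro y hy
    rw [hF]
    simp only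
    rw [if_neg]
    intro hlt
    exact hy ⟨(y.2, y.1 - y.2 - 1), Prod.ext (by simp [hι]; omega) (by simp [hι])⟩
  have hcomp : (fun x : ℕ × ℕ => F (ι x)) = fun x : ℕ × ℕ =>
      1 / (2 * (x.1:ℝ) + 2 * (x.2:ℝ) + 3) ^ (2 * n - 2) *
        (1 / ((2 * (x.1:ℝ) + 2 * (x.2:ℝ) + 3) ^ 2 - (2 * (x.1:ℝ) + 1) ^ 2)) := by
    funext x
    rw [hF, hι]
    simp only
    rw [if_pos (by omega)]
    have e : (2 * ((x.1 + x.2 + 1 : ℕ):ℝ) + 1) = 2 * (x.1:ℝ) + 2 * (x.2:ℝ) + 3 := by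
      push_cast; ring
    rw [e]
  have hBtsum : (∑' x : ℕ × ℕ, 1 / (2 * (x.1:ℝ) + 2 * (x.2:ℝ) + 3) ^ (2 * n - 2) *
        (1 / ((2 * (x.1:ℝ) + 2 * (x.2:ℝ) + 3) ^ 2 - (2 * (x.1:ℝ) + 1) ^ 2)))
      = ∑' y : ℕ × ℕ, F y := by
    rw [← hcomp]
    exact hinj.tsum_eq (Function.support_subset_iff'.mpr hsupp)
  have hSF : Summable F := by
    rw [← hinj.summable_iff hsupp]
    rw [Function.comp_def, hcomp]
    exact SB n hn
  have fiberB : ∀ m : ℕ, HasSum (fun t : ℕ => F (m, t))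
      (1 / (2 * (m:ℝ) + 1) ^ (2 * n - 2) * (H (2 * m) / (4 * (2 * (m:ℝ) + 1)))) := by
    intro m
    have hz : ∀ t ∉ Finset.range m, F (m, t) = 0 := by
      intro t ht
      rw [Finset.mem_range] at ht
      rw [hF]
      simp only
      rw [if_neg (by omega)]
    have h : HasSum (fun t : ℕ => F (m, t)) (∑ t ∈ Finset.range m, F (m, t)) := hasSum_sum_of_ne_finset_zero hz
    have he : ∑ t ∈ Finset.range m, F (m, t)
        = 1 / (2 * (m:ℝ) + 1) ^ (2 * n - 2) * (H (2 * m) / (4 * (2 * (m:ℝ) + 1))) := by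
      have hc : ∀ t ∈ Finset.range m, F (m, t)
          = 1 / (2 * (m:ℝ) + 1) ^ (2 * n - 2) *
            (1 / ((2 * (m:ℝ) + 1) ^ 2 - (2 * (t:ℝ) + 1) ^ 2)) := by
        intro t ht
        rw [Finset.mem_range] at ht
        rw [hF]
        simp only
        rw [if_pos (by omega)]
      rw [Finset.sum_congr rfl hc, ← Finset.mul_sum, B_inner m]
    rwa [he] at h
  have hB : HasSum (fun m : ℕ => 1 / (2 * (m:ℝ) + 1) ^ (2 * n - 2) *
      (H (2 * m) / (4 * (2 * (m:ℝ) + 1)))) (∑' y : ℕ × ℕ, F y) :=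
    hSF.hasSum.prod_fiberwise fiberB
  have hsub := hA.sub hB
  have hpt : (fun m : ℕ => 1 / (2 * (m:ℝ) + 1) ^ (2 * n - 2) *
        (H (2 * m + 1) / (4 * (2 * (m:ℝ) + 1)))
      - 1 / (2 * (m:ℝ) + 1) ^ (2 * n - 2) * (H (2 * m) / (4 * (2 * (m:ℝ) + 1))))
      = fun m : ℕ => 1 / 4 * (1 / (2 * (m:ℝ) + 1) ^ (2 * n)) := by
    funext m
    rw [Hsucc m]
    have hm : (0:ℝ) ≤ (m:ℝ) := Nat.cast_nonneg _
    have hq : (2 * (m:ℝ) + 1) ≠ 0 := by linarith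
    have hpow : (2 * (m:ℝ) + 1) ^ (2 * n) = (2 * (m:ℝ) + 1) ^ (2 * n - 2) * (2 * (m:ℝ) + 1) ^ 2 := by
      rw [← pow_add]
      congr 1
      omega
    rw [hpow]
    have hqp : (2 * (m:ℝ) + 1) ^ (2 * n - 2) ≠ 0 := pow_ne_zero _ hq
    field_simp
    ring
  rw [hpt] at hsub
  rw [hBtsum, ← hsub.tsum_eq, tsum_mul_left]
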